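/- Let n, d be positive integers. For an integer l ≥ 0 one has A^{n,d}_{ld} ≠ 0 if and only if l ≤ n − ⌈n/d⌉. In particular, the polynomial Σ_{l≥0} A^{n,d}_{ld} t^l has degree exactly n − ⌈n/d⌉ = ⌊n(d−1)/d⌋. -/

import Mathlib

/-- the integers `A^{n,d}_i` defined by `(1 + T + ⋯ + T^{d−1})^n = Σ_i A^{n,d}_i T^i`. -/
noncomputable def A (n d i : ℕ) : ℕ :=
  ((∑ j ∈ Finset.range d, (Polynomial.X : Polynomial ℕ) ^ j) ^ n).coeff i

lemma coeff_base (d b : ℕ) (hb : b < d) :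
    (∑ j ∈ Finset.range d, (Polynomial.X : Polynomial ℕ) ^ j).coeff b = 1 := by
  rw [Polynomial.finset_sum_coeff]
  simp only [Polynomial.coeff_X_pow]
  rw [Finset.sum_ite_eq (Finset.range d) b (fun _ => (1:ℕ))]
  simp [hb]

lemma A_pos (n d : ℕ) (hd : 0 < d) : ∀ i, i ≤ n * (d - 1) → 0 < A n d i := by
  induction n with
  | zero => intro i hi; simp at hi; subst hi; simp [A]
  | succ n ih =>
    intro i hi
    set p : Polynomial ℕ := ∑ j ∈ Finset.range d, (Polynomial.X : Polynomial ℕ) ^ j with hp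
    have hA : A (n+1) d i = (p ^ n * p).coeff i := by
      rw [A, pow_succ]
    set b := min i (d - 1) with hb
    set a := i - b with ha
    have hab : a + b = i := by omega
    have hexp : (n+1) * (d-1) = n*(d-1) + (d-1) := by ring
    have ha' : a ≤ n * (d - 1) := by
      rcases le_or_gt i (d-1) with h | h
      · have : b = i := by omega
        omega
      · have : b = d - 1 := by omega
        have : a = i - (d-1) := by omega
        omega
    have hb' : b < d := by omega
    have hmem : (a, b) ∈ Finset.HasAntidiagonal.antidiagonal i := by
      simp [hab]
    rw [hA, Polynomial.coeff_mul]
    have hterm : 0 < (p ^ n).coeff a * p.coeff b := by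
      have h1 := ih a ha'
      rw [A] at h1
      have h2 : p.coeff b = 1 := coeff_base d b hb'
      rw [h2]
      simpa using h1
    calc 0 < (p ^ n).coeff a * p.coeff b := hterm
      _ ≤ ∑ x ∈ Finset.HasAntidiagonal.antidiagonal i, (p ^ n).coeff x.1 * p.coeff x.2 :=
        Finset.single_le_sum (f := fun x => (p ^ n).coeff x.1 * p.coeff x.2) (fun x _ => Nat.zero_le _) hmem

lemma A_zero (n d i : ℕ) (hi : n * (d - 1) < i) : A n d i = 0 := by
  set p : Polynomial ℕ := ∑ j ∈ Finset.range d, (Polynomial.X : Polynomial ℕ) ^ j with hp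
  have hdeg : p.natDegree ≤ d - 1 := by
    apply Polynomial.natDegree_sum_le_of_forall_le
    intro j hj
    simp only [Finset.mem_range] at hj
    calc (Polynomial.X ^ j : Polynomial ℕ).natDegree ≤ j := Polynomial.natDegree_X_pow_le j
      _ ≤ d - 1 := by omega
  have : (p ^ n).natDegree ≤ n * (d - 1) := by
    calc (p ^ n).natDegree ≤ n * p.natDegree := Polynomial.natDegree_pow_le
      _ ≤ n * (d - 1) := Nat.mul_le_mul_left n hdeg
  exact Polynomial.coeff_eq_zero_of_natDegree_lt (lt_of_le_of_lt this hi)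

lemma A_ne_zero_iff (n d i : ℕ) (hd : 0 < d) : A n d i ≠ 0 ↔ i ≤ n * (d - 1) := by
  constructor
  · intro h
    by_contra hc
    exact h (A_zero n d i (by omega))
  · intro h
    exact (A_pos n d hd i h).ne'

theorem A_mul_d_ne_zero_iff (n d : ℕ) (hn : 0 < n) (hd : 0 < d) :
    (∀ l : ℕ, A n d (l * d) ≠ 0 ↔ (l : ℤ) ≤ (n : ℤ) - ⌈(n : ℚ) / (d : ℚ)⌉) ∧
    (n : ℤ) - ⌈(n : ℚ) / (d : ℚ)⌉ = ⌊(n : ℚ) * ((d : ℚ) - 1) / (d : ℚ)⌋ := by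
  have hd0 : (0:ℚ) < (d:ℚ) := by exact_mod_cast hd
  have heq : (n : ℤ) - ⌈(n : ℚ) / (d : ℚ)⌉ = ⌊(n : ℚ) * ((d : ℚ) - 1) / (d : ℚ)⌋ := by
    have h1 : (n : ℚ) * ((d : ℚ) - 1) / (d : ℚ) = -((n:ℚ) / d) + ((n:ℤ):ℚ) := by
      push_cast
      field_simp
      ring
    rw [h1, Int.floor_add_intCast, Int.floor_neg]
    ring
  refine ⟨fun l => ?_, heq⟩
  rw [A_ne_zero_iff n d (l*d) hd, heq]
  rw [Int.le_floor]
  have hc : ((n*(d-1):ℕ):ℚ) = (n:ℚ)*((d:ℚ)-1) := by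
    push_cast [Nat.cast_sub hd]
    ring
  rw [le_div_iff₀ hd0]
  constructor
  · intro h
    have : ((l*d:ℕ):ℚ) ≤ ((n*(d-1):ℕ):ℚ) := by exact_mod_cast h
    rw [hc] at this
    push_cast at this ⊢
    linarith
  · intro h
    have : ((l*d:ℕ):ℚ) ≤ ((n*(d-1):ℕ):ℚ) := by
      rw [hc]; push_cast at h ⊢; linarith
    exact_mod_cast this
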